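/- Every automorphism of the complex 2-step nilpotent commutative algebra A₀₁ (3-dimensional, with the single nonzero product e₁∘e₁ = e₂) has matrix of the form [[a₁₁,0,0],[a₂₁,a₁₁²,a₂₃],[a₃₁,0,a₃₃]] with respect to the basis e₁,e₂,e₃ (with a₁₁a₃₃ ≠ 0), and conversely every such invertible matrix defines an automorphism. -/

import Mathlib

/-- The commutative algebra A₀₁ : e₁∘e₁ = e₂. -/
def mulA01 (x y : Fin 3 → ℂ) : Fin 3 → ℂ :=
  ![0, x 0 * y 0, 0]

lemma decomp3 (x : Fin 3 → ℂ) :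
    x = x 0 • ![(1:ℂ),0,0] + x 1 • ![(0:ℂ),1,0] + x 2 • ![(0:ℂ),0,1] := by
  funext i; fin_cases i <;> simp

theorem stmt_16 (φ : (Fin 3 → ℂ) →ₗ[ℂ] (Fin 3 → ℂ)) :
    (Function.Bijective φ ∧
      ∀ x y : Fin 3 → ℂ, φ (mulA01 x y) = mulA01 (φ x) (φ y)) ↔
    (∃ a11 a21 a31 a23 a33 : ℂ, a11 * a33 ≠ 0 ∧
      φ ![1, 0, 0] = a11 • ![(1 : ℂ), 0, 0] + a21 • ![(0 : ℂ), 1, 0] + a31 • ![(0 : ℂ), 0, 1] ∧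
      φ ![0, 1, 0] = a11 ^ 2 • ![(0 : ℂ), 1, 0] ∧
      φ ![0, 0, 1] = a23 • ![(0 : ℂ), 1, 0] + a33 • ![(0 : ℂ), 0, 1]) := by
  constructor
  · rintro ⟨hbij, hmul⟩
    set a11 := φ ![1,0,0] 0 with ha11
    set a21 := φ ![1,0,0] 1 with ha21
    set a31 := φ ![1,0,0] 2 with ha31
    set a23 := φ ![0,0,1] 1 with ha23
    set a33 := φ ![0,0,1] 2 with ha33
    -- e1 ∘ e1 = e2
    have he2 : mulA01 ![(1:ℂ),0,0] ![(1:ℂ),0,0] = ![(0:ℂ),1,0] := by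
      funext i; fin_cases i <;> simp [mulA01]
    have h2 : φ ![(0:ℂ),1,0] = a11 ^ 2 • ![(0:ℂ),1,0] := by
      have := hmul ![(1:ℂ),0,0] ![(1:ℂ),0,0]
      rw [he2] at this
      rw [this]
      funext i; fin_cases i <;> simp [mulA01, sq] <;> rfl
    -- e3 ∘ e3 = 0 gives (φ e3) 0 = 0
    have he3 : mulA01 ![(0:ℂ),0,1] ![(0:ℂ),0,1] = 0 := by
      funext i; fin_cases i <;> simp [mulA01]
    have h30 : φ ![(0:ℂ),0,1] 0 = 0 := by
      have := hmul ![(0:ℂ),0,1] ![(0:ℂ),0,1]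
      rw [he3, map_zero] at this
      have h1' : φ ![(0:ℂ),0,1] 0 * φ ![(0:ℂ),0,1] 0 = 0 := by
        have h := congrFun this.symm 1
        simpa [mulA01] using h
      exact mul_self_eq_zero.mp h1'
    have h3 : φ ![(0:ℂ),0,1] = a23 • ![(0:ℂ),1,0] + a33 • ![(0:ℂ),0,1] := by
      funext i; fin_cases i <;> simp [ha23, ha33, h30]
    have h1 : φ ![(1:ℂ),0,0] = a11 • ![(1:ℂ),0,0] + a21 • ![(0:ℂ),1,0] + a31 • ![(0:ℂ),0,1] := by
      funext i; fin_cases i <;> simp [ha11, ha21, ha31]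
    -- a11 ≠ 0
    have hne1 : a11 ≠ 0 := by
      intro h
      have : φ ![(0:ℂ),1,0] = φ 0 := by rw [h2, h, map_zero]; simp
      have := hbij.1 this
      have := congrFun this 1
      simp at this
    have hne3 : a33 ≠ 0 := by
      intro h
      have key : φ (a11 ^ 2 • ![(0:ℂ),0,1] - a23 • ![(0:ℂ),1,0]) = 0 := by
        rw [map_sub, map_smul, map_smul, h2, h3, h]
        funext i; fin_cases i <;> simp <;> ring
      have := hbij.1 (by rw [key, map_zero] : φ (a11 ^ 2 • ![(0:ℂ),0,1] - a23 • ![(0:ℂ),1,0]) = φ 0)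
      have := congrFun this 2
      simp at this
      exact hne1 this
    exact ⟨a11, a21, a31, a23, a33, mul_ne_zero hne1 hne3, h1, h2, h3⟩
  · rintro ⟨a11, a21, a31, a23, a33, hne, h1, h2, h3⟩
    have hne1 : a11 ≠ 0 := fun h => hne (by rw [h, zero_mul])
    have hne3 : a33 ≠ 0 := fun h => hne (by rw [h, mul_zero])
    have hval : ∀ x : Fin 3 → ℂ,
        φ x = x 0 • φ ![(1:ℂ),0,0] + x 1 • φ ![(0:ℂ),1,0] + x 2 • φ ![(0:ℂ),0,1] := by
      intro x
      conv_lhs => rw [decomp3 x]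
      rw [map_add, map_add, map_smul, map_smul, map_smul]
    constructor
    · -- bijective
      have hinj : Function.Injective φ := by
        rw [← LinearMap.ker_eq_bot]
        rw [LinearMap.ker_eq_bot']
        intro x hx
        rw [hval x, h1, h2, h3] at hx
        have e0 := congrFun hx 0
        simp at e0
        have hx0 : x 0 = 0 := e0.resolve_right hne1
        have e2 := congrFun hx 2
        simp [hx0] at e2
        have hx2 : x 2 = 0 := e2.resolve_right hne3
        have e1 := congrFun hx 1
        simp [hx0, hx2] at e1
        have hx1 : x 1 = 0 := by
          rcases e1 with h | h
          · exact h
          · exact absurd h hne1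
        funext i; fin_cases i <;> simp [hx0, hx1, hx2]
      exact ⟨hinj, LinearMap.injective_iff_surjective.mp hinj⟩
    · intro x y
      have hmxy : mulA01 x y = (x 0 * y 0) • ![(0:ℂ),1,0] := by
        funext i; fin_cases i <;> simp [mulA01]
      have hx0 : φ x 0 = x 0 * a11 := by
        rw [hval x, h1, h2, h3]; simp
      have hy0 : φ y 0 = y 0 * a11 := by
        rw [hval y, h1, h2, h3]; simp
      rw [hmxy, map_smul, h2]
      funext i; fin_cases i <;> simp [mulA01, hx0, hy0] <;> ring
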